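/- arXiv:1507.08091 — 3 statements merged into one kernel-verified Lean document; each statement's English description precedes it below -/
import Mathlib

section
/- For any real r > 1, there exist only finitely many positive integers j such that ∏_{k > j} 1/(1 - p_k^{-r}) < 1 + p_j^{-r}, where p_k denotes the k-th prime. -/
open Filter

namespace Stmt6Aux

local notation "pr" => Nat.nth Nat.Prime

lemma two_le_pr (k : ℕ) : 2 ≤ pr k := (Nat.prime_nth_prime k).two_le

lemma pr_pos_real (k : ℕ) : (0:ℝ) < pr k := by
  have := two_le_pr k
  positivity

lemma x_pos (r : ℝ) (k : ℕ) : 0 < (pr k : ℝ) ^ (-r) :=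
  Real.rpow_pos_of_pos (pr_pos_real k) _

lemma x_le_half {r : ℝ} (hr : 1 < r) (k : ℕ) : (pr k : ℝ) ^ (-r) ≤ 1/2 := by
  have h2 : (2:ℝ) ≤ pr k := by exact_mod_cast two_le_pr k
  have h1 : (pr k : ℝ) ^ (-r) ≤ (2:ℝ) ^ (-r) := by
    rw [Real.rpow_neg (by linarith : (0:ℝ) ≤ 2), Real.rpow_neg (pr_pos_real k).le]
    exact inv_anti₀ (Real.rpow_pos_of_pos two_pos r)
      (Real.rpow_le_rpow (by norm_num) h2 (by linarith))
  have h3 : (2:ℝ) ^ (-r) ≤ (2:ℝ) ^ (-1 : ℝ) :=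
    Real.rpow_le_rpow_of_exponent_le one_le_two (by linarith)
  calc (pr k : ℝ) ^ (-r) ≤ (2:ℝ) ^ (-r) := h1
    _ ≤ (2:ℝ) ^ (-1:ℝ) := h3
    _ = 1/2 := by rw [Real.rpow_neg_one]; norm_num

lemma summable_x (r : ℝ) (hr : 1 < r) (j : ℕ) :
    Summable (fun i : ℕ => (pr (j + i) : ℝ) ^ (-r)) := by
  have h : Summable (fun p : Nat.Primes => (p : ℝ) ^ (-r)) :=
    Nat.Primes.summable_rpow (r := -r) |>.mpr (by linarith)
  have hi : Function.Injective
      (fun i : ℕ => (⟨pr (j + i), Nat.prime_nth_prime _⟩ : Nat.Primes)) := by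
    intro a b hab
    have := Nat.nth_injective Nat.infinite_setOf_prime (Subtype.ext_iff.mp hab)
    omega
  exact (h.comp_injective hi).congr fun i => rfl

lemma summable_log (r : ℝ) (hr : 1 < r) (j : ℕ) :
    Summable (fun i : ℕ => Real.log ((1 - (pr (j + i) : ℝ) ^ (-r))⁻¹)) := by
  refine Summable.of_nonneg_of_le (fun i => ?_) (fun i => ?_)
    ((summable_x r hr j).mul_left 2)
  · apply Real.log_nonneg
    rw [one_le_inv₀ (by nlinarith [x_le_half hr (j+i), x_pos r (j+i)])]
    nlinarith [x_pos r (j+i)]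
  · set x := (pr (j + i) : ℝ) ^ (-r) with hx
    have h1 : 0 < x := x_pos r (j+i)
    have h2 : x ≤ 1/2 := x_le_half hr (j+i)
    have h3 : (0:ℝ) < 1 - x := by linarith
    have := Real.log_le_sub_one_of_pos (x := (1 - x)⁻¹) (by positivity)
    have h4 : (1 - x)⁻¹ - 1 ≤ 2 * x := by
      rw [inv_eq_one_div, div_sub' h3.ne']
      rw [div_le_iff₀ h3]
      nlinarith
    linarith

lemma multipliable_f (r : ℝ) (hr : 1 < r) (j : ℕ) :
    Multipliable (fun i : ℕ => (1 - (pr (j + i) : ℝ) ^ (-r))⁻¹) := by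
  have := Real.multipliable_of_summable_log
    (f := fun (i : ℕ) => (1 - (pr (j + i) : ℝ) ^ (-r))⁻¹)
    (fun i => by
      have h1 := x_pos r (j+i)
      have h2 := x_le_half hr (j+i)
      have h3 : (0:ℝ) < 1 - (pr (j + i) : ℝ) ^ (-r) := by linarith
      positivity)
    (summable_log r hr j)
  exact this

lemma one_add_sum_le_prod (N : ℕ) (x : ℕ → ℝ) (hx : ∀ i, 0 ≤ x i) :
    1 + ∑ i ∈ Finset.range N, x i ≤ ∏ i ∈ Finset.range N, (1 + x i) := by
  induction N with
  | zero => simp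
  | succ n ih =>
    rw [Finset.sum_range_succ, Finset.prod_range_succ]
    have h1 : 0 ≤ ∑ i ∈ Finset.range n, x i := Finset.sum_nonneg fun i _ => hx i
    nlinarith [hx n]

lemma tailProd_ge (r : ℝ) (hr : 1 < r) (j N : ℕ) :
    1 + ∑ i ∈ Finset.range N, (pr (j + i) : ℝ) ^ (-r) ≤
      ∏' i : ℕ, (1 - (pr (j + i) : ℝ) ^ (-r))⁻¹ := by
  have hone : ∀ i : ℕ, (1:ℝ) ≤ (1 - (pr (j + i) : ℝ) ^ (-r))⁻¹ := by
    intro i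
    have h1 := x_pos r (j+i)
    have h2 := x_le_half hr (j+i)
    rw [one_le_inv₀ (by linarith)]
    linarith
  calc 1 + ∑ i ∈ Finset.range N, (pr (j + i) : ℝ) ^ (-r)
      ≤ ∏ i ∈ Finset.range N, (1 + (pr (j + i) : ℝ) ^ (-r)) :=
        one_add_sum_le_prod N _ (fun i => (x_pos r (j+i)).le)
    _ ≤ ∏ i ∈ Finset.range N, (1 - (pr (j + i) : ℝ) ^ (-r))⁻¹ := by
        apply Finset.prod_le_prod
        · intro i _
          have := x_pos r (j+i); linarith
        · intro i _
          have h1 := x_pos r (j+i)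
          have h2 := x_le_half hr (j+i)
          rw [inv_eq_one_div, le_div_iff₀ (by linarith)]
          nlinarith
    _ ≤ ∏' i : ℕ, (1 - (pr (j + i) : ℝ) ^ (-r))⁻¹ := by
        refine ge_of_tendsto (multipliable_f r hr j).hasProd ?_
        filter_upwards [Filter.eventually_ge_atTop (Finset.range N)] with s hs
        rw [← Finset.prod_sdiff hs]
        have h2 : (1:ℝ) ≤ ∏ i ∈ s \ Finset.range N, (1 - (pr (j + i) : ℝ) ^ (-r))⁻¹ := by
          have h3 := Finset.prod_le_prod (s := s \ Finset.range N) (f := fun _ => (1:ℝ))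
            (g := fun i => (1 - (pr (j + i) : ℝ) ^ (-r))⁻¹)
            (fun i _ => zero_le_one) (fun i _ => hone i)
          simpa using h3
        have h4 : (0:ℝ) ≤ ∏ i ∈ Finset.range N, (1 - (pr (j + i) : ℝ) ^ (-r))⁻¹ :=
          Finset.prod_nonneg fun i _ => le_trans zero_le_one (hone i)
        exact le_mul_of_one_le_left h4 h2

/-- Chebyshev-type lower bound ingredient: `4^n < (2n)^(π(2n)+1)`. -/
lemma cheb_nat (n : ℕ) (hn : 4 ≤ n) :
    4 ^ n < (2 * n) ^ (Nat.primeCounting (2 * n) + 1) := by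
  have h1 : 4 ^ n < n * Nat.centralBinom n := Nat.four_pow_lt_mul_centralBinom n hn
  have h2 : Nat.centralBinom n ≤ (2 * n) ^ Nat.primeCounting (2 * n) := by
    rw [← Nat.prod_pow_factorization_centralBinom n]
    have hps : ∏ p ∈ Finset.range (2 * n + 1), p ^ (Nat.centralBinom n).factorization p =
        ∏ p ∈ (2 * n + 1).primesBelow, p ^ (Nat.centralBinom n).factorization p := by
      rw [Nat.primesBelow]
      refine (Finset.prod_filter_of_ne ?_).symm
      intro p _ hp
      by_contra hnp
      rw [Nat.factorization_eq_zero_of_not_prime _ hnp] at hp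
      simp at hp
    rw [hps]
    calc ∏ p ∈ (2 * n + 1).primesBelow, p ^ (Nat.centralBinom n).factorization p
        ≤ ∏ _p ∈ (2 * n + 1).primesBelow, (2 * n) := by
          apply Finset.prod_le_prod
          · intro i _; positivity
          · intro p _
            rw [Nat.centralBinom_eq_two_mul_choose]
            exact Nat.pow_factorization_choose_le (by omega)
      _ = (2 * n) ^ (2 * n + 1).primesBelow.card := Finset.prod_const _
      _ = (2 * n) ^ Nat.primeCounting (2 * n) := by
          rw [Nat.primesBelow_card_eq_primeCounting']
          rfl
  calc 4 ^ n < n * Nat.centralBinom n := h1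
    _ ≤ n * (2 * n) ^ Nat.primeCounting (2 * n) := Nat.mul_le_mul_left _ h2
    _ ≤ (2 * n) * (2 * n) ^ Nat.primeCounting (2 * n) :=
        Nat.mul_le_mul_right _ (by omega)
    _ = (2 * n) ^ (Nat.primeCounting (2 * n) + 1) := by ring

lemma cheb_real (n : ℕ) (hn : 4 ≤ n) :
    (n : ℝ) * Real.log 4 < (Nat.primeCounting (2 * n) + 1) * Real.log (2 * n) := by
  have h := cheb_nat n hn
  have h4 : ((4:ℝ)) ^ n < ((2 * n : ℕ) : ℝ) ^ (Nat.primeCounting (2 * n) + 1) := by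
    exact_mod_cast h
  have hlog := Real.log_lt_log (by positivity) h4
  rw [Real.log_pow, Real.log_pow] at hlog
  exact_mod_cast hlog

lemma pc_nth (k : ℕ) : Nat.primeCounting (pr k) = k + 1 := by
  have h1 : Nat.primeCounting (pr k) = Nat.count Nat.Prime (pr k + 1) := rfl
  rw [h1, Nat.count_succ, Nat.count_nth_of_infinite Nat.infinite_setOf_prime]
  simp [Nat.prime_nth_prime]


lemma nth_le_of_lt_pc {k m : ℕ} (h : k < Nat.primeCounting m) : pr k ≤ m := by
  have h2 : k < Nat.count Nat.Prime (m + 1) := h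
  have h3 := Nat.nth_lt_of_lt_count h2
  omega

lemma one_le_log_four : (1:ℝ) ≤ Real.log 4 := by
  have h1 : Real.exp 1 ≤ 4 := by
    have := Real.exp_one_lt_d9
    linarith
  calc (1:ℝ) = Real.log (Real.exp 1) := (Real.log_exp 1).symm
    _ ≤ Real.log 4 := Real.log_le_log (Real.exp_pos 1) h1

lemma key (r : ℝ) (hr : 1 < r) :
    ∀ᶠ j : ℕ in atTop, ∃ N : ℕ,
      (pr (j - 1) : ℝ) ^ (-r) ≤ ∑ i ∈ Finset.range N, (pr (j + i) : ℝ) ^ (-r) := by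
  have hr0 : (0:ℝ) < r := by linarith
  have h4r : (0:ℝ) < (4:ℝ) ^ r := Real.rpow_pos_of_pos (by norm_num) r
  set C : ℝ := (4:ℝ) ^ r + 3 with hC
  have hC1 : (1:ℝ) ≤ C := by simp only [hC]; linarith
  have hC0 : (0:ℝ) < C := by linarith
  have hlog : ∀ᶠ y : ℝ in atTop, Real.log y ≤ y ^ (1/r) / (3 * C) := by
    have h := isLittleO_log_rpow_atTop (by positivity : (0:ℝ) < 1/r)
    have hb := h.bound (c := (3*C)⁻¹) (by positivity)
    filter_upwards [hb, Filter.eventually_ge_atTop (1:ℝ)] with y hy hy1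
    have h2 : |Real.log y| ≤ (3*C)⁻¹ * |y ^ (1/r)| := by
      simpa [Real.norm_eq_abs] using hy
    rw [abs_of_nonneg (Real.log_nonneg hy1),
      abs_of_nonneg (Real.rpow_nonneg (by linarith) _)] at h2
    rw [div_eq_inv_mul]
    linarith
  rw [eventually_atTop] at hlog
  obtain ⟨M, hM⟩ := hlog
  rw [eventually_atTop]
  refine ⟨⌈M⌉₊ + 5, fun j hj => ?_⟩
  have hj1 : 1 ≤ j := by omega
  set P : ℕ := pr (j - 1) with hPdef
  have hPj : j + 1 ≤ P := by
    have := Nat.add_two_le_nth_prime (j - 1)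
    omega
  have hPM : M ≤ (P:ℝ) := by
    have h1 : (⌈M⌉₊ : ℝ) ≤ (P:ℝ) := by exact_mod_cast (by omega : ⌈M⌉₊ ≤ P)
    linarith [Nat.le_ceil M]
  have hP6 : 6 ≤ P := by omega
  have hP4 : (4:ℝ) ≤ (P:ℝ) := by exact_mod_cast (by omega : 4 ≤ P)
  have hP1 : (1:ℝ) ≤ (P:ℝ) := by linarith
  have hP0 : (0:ℝ) < (P:ℝ) := by linarith
  have hlogP := hM (P:ℝ) hPM
  -- the auxiliary quantities
  set n : ℕ := ⌈(P:ℝ) ^ (1 + 1/r)⌉₊ with hn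
  set K : ℕ := ⌈(4:ℝ) ^ r * P⌉₊ with hK
  have hA : (P:ℝ) ≤ (P:ℝ) ^ (1 + 1/r) := by
    nth_rewrite 1 [← Real.rpow_one (P:ℝ)]
    exact Real.rpow_le_rpow_of_exponent_le hP1 (by nlinarith [one_div_pos.mpr hr0])
  have hn_lb : (P:ℝ) ^ (1 + 1/r) ≤ (n:ℝ) := Nat.le_ceil _
  have hn4 : 4 ≤ n := by exact_mod_cast le_trans hP4 (le_trans hA hn_lb)
  have hn_ub : (n:ℝ) ≤ 2 * (P:ℝ) ^ (1 + 1/r) := by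
    have h1 := Nat.ceil_lt_add_one (by positivity : (0:ℝ) ≤ (P:ℝ) ^ (1 + 1/r))
    have h2 : (1:ℝ) ≤ (P:ℝ) ^ (1 + 1/r) := le_trans hP1 hA
    rw [← hn] at h1
    linarith
  have hsplit : (P:ℝ) ^ (1 + 1/r) = (P:ℝ) * (P:ℝ) ^ (1/r) := by
    rw [Real.rpow_add hP0, Real.rpow_one]
  have hPr_le : (P:ℝ) ^ (1/r) ≤ (P:ℝ) := by
    nth_rewrite 2 [← Real.rpow_one (P:ℝ)]
    refine Real.rpow_le_rpow_of_exponent_le hP1 ?_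
    rw [div_le_one hr0]; linarith
  have h2n_pos : (0:ℝ) < ((2*n : ℕ):ℝ) := by positivity
  have h2n_ub : ((2*n:ℕ):ℝ) ≤ 4 * (P:ℝ) ^ (1 + 1/r) := by
    push_cast
    linarith
  have hlog2n : Real.log ((2*n:ℕ):ℝ) ≤ 3 * Real.log (P:ℝ) := by
    have hcube : ((2*n:ℕ):ℝ) ≤ (P:ℝ) ^ (3:ℕ) := by
      have : 4 * (P:ℝ) ^ (1 + 1/r) = 4 * ((P:ℝ) * (P:ℝ) ^ (1/r)) := by rw [hsplit]
      have h3 : (P:ℝ) ^ (3:ℕ) = (P:ℝ) * (P:ℝ) * (P:ℝ) := by ring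
      nlinarith [hPr_le, hP4, hP1, Real.rpow_nonneg hP0.le (1/r)]
    calc Real.log ((2*n:ℕ):ℝ) ≤ Real.log ((P:ℝ) ^ (3:ℕ)) :=
          Real.log_le_log h2n_pos hcube
      _ = 3 * Real.log (P:ℝ) := by rw [Real.log_pow]; push_cast; ring
  have hlogP_nonneg : (0:ℝ) ≤ Real.log (P:ℝ) := Real.log_nonneg hP1
  have hK_lb : (4:ℝ) ^ r * (P:ℝ) ≤ (K:ℝ) := Nat.le_ceil _
  have hK_ub : (K:ℝ) ≤ (4:ℝ) ^ r * (P:ℝ) + 1 := by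
    have := Nat.ceil_lt_add_one (by positivity : (0:ℝ) ≤ (4:ℝ) ^ r * (P:ℝ))
    rw [← hK] at this
    linarith
  have hj_le : (j:ℝ) ≤ (P:ℝ) - 1 := by
    have : ((j+1 : ℕ):ℝ) ≤ (P:ℝ) := by exact_mod_cast hPj
    push_cast at this
    linarith
  -- the central counting inequality
  have hπ : j + K < Nat.primeCounting (2*n) + 1 := by
    have hcheb := cheb_real n hn4
    have hCP : C * (P:ℝ) = (4:ℝ) ^ r * (P:ℝ) + 3 * (P:ℝ) := by rw [hC]; ring
    have hjK : ((j:ℝ) + K + 1) ≤ C * (P:ℝ) := by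
      rw [hCP]
      linarith
    have hlog2n_nonneg : (0:ℝ) ≤ Real.log ((2*n:ℕ):ℝ) := by
      apply Real.log_nonneg
      push_cast
      have : (4:ℝ) ≤ (n:ℝ) := by exact_mod_cast hn4
      linarith
    have hmain : ((j:ℝ) + K + 1) * Real.log ((2*n:ℕ):ℝ) ≤ (n:ℝ) * Real.log 4 := by
      have h1 : ((j:ℝ) + K + 1) * Real.log ((2*n:ℕ):ℝ) ≤ (C * (P:ℝ)) * (3 * Real.log (P:ℝ)) := by
        apply mul_le_mul hjK hlog2n hlog2n_nonneg (by positivity)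
      have h2 : (C * (P:ℝ)) * (3 * Real.log (P:ℝ)) ≤ (C * (P:ℝ)) * (3 * ((P:ℝ) ^ (1/r) / (3 * C))) := by
        apply mul_le_mul_of_nonneg_left _ (by positivity)
        linarith
      have h3 : (C * (P:ℝ)) * (3 * ((P:ℝ) ^ (1/r) / (3 * C))) = (P:ℝ) * (P:ℝ) ^ (1/r) := by
        field_simp
      have h4 : (P:ℝ) * (P:ℝ) ^ (1/r) ≤ (n:ℝ) := by rw [← hsplit]; exact hn_lb
      have h5 : (n:ℝ) ≤ (n:ℝ) * Real.log 4 := by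
        nth_rewrite 1 [← mul_one (n:ℝ)]
        apply mul_le_mul_of_nonneg_left one_le_log_four (by positivity)
      calc ((j:ℝ) + K + 1) * Real.log ((2*n:ℕ):ℝ) ≤ C * (P:ℝ) * (3 * Real.log (P:ℝ)) := h1
        _ ≤ C * (P:ℝ) * (3 * ((P:ℝ) ^ (1/r) / (3 * C))) := h2
        _ = (P:ℝ) * (P:ℝ) ^ (1/r) := h3
        _ ≤ (n:ℝ) := h4
        _ ≤ (n:ℝ) * Real.log 4 := h5
    have hcheb2 : (n:ℝ) * Real.log 4 <
        ((Nat.primeCounting (2*n) : ℝ) + 1) * Real.log ((2*n:ℕ):ℝ) := by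
      push_cast at hcheb ⊢
      linarith
    have hlog2n_pos : (0:ℝ) < Real.log ((2*n:ℕ):ℝ) := by
      apply Real.log_pos
      push_cast
      have h6 : (4:ℝ) ≤ (n:ℝ) := by exact_mod_cast hn4
      linarith
    have hfin := lt_of_mul_lt_mul_right (lt_of_le_of_lt hmain hcheb2) hlog2n_pos.le
    have hfin2 : ((j + K : ℕ):ℝ) < ((Nat.primeCounting (2*n) + 1 : ℕ):ℝ) := by
      push_cast
      linarith
    exact_mod_cast hfin2
  -- the sum bound
  refine ⟨K, ?_⟩
  have hterm : ∀ i ∈ Finset.range K, ((2*n:ℕ):ℝ) ^ (-r) ≤ (pr (j + i) : ℝ) ^ (-r) := by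
    intro i hi
    rw [Finset.mem_range] at hi
    have hle : pr (j + i) ≤ 2*n := by
      apply nth_le_of_lt_pc
      omega
    have hle' : ((pr (j + i) : ℕ):ℝ) ≤ ((2*n:ℕ):ℝ) := by exact_mod_cast hle
    rw [Real.rpow_neg h2n_pos.le, Real.rpow_neg (pr_pos_real (j+i)).le]
    exact inv_anti₀ (Real.rpow_pos_of_pos (pr_pos_real (j+i)) r)
      (Real.rpow_le_rpow (pr_pos_real (j+i)).le hle' hr0.le)
  have hsum : (K:ℝ) * ((2*n:ℕ):ℝ) ^ (-r) ≤ ∑ i ∈ Finset.range K, (pr (j + i) : ℝ) ^ (-r) := by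
    have := Finset.card_nsmul_le_sum (Finset.range K)
      (fun i => (pr (j + i) : ℝ) ^ (-r)) (((2*n:ℕ):ℝ) ^ (-r)) hterm
    simpa [nsmul_eq_mul] using this
  refine le_trans ?_ hsum
  -- final rpow computation
  have hmono : ((4 * (P:ℝ) ^ (1 + 1/r))) ^ (-r) ≤ ((2*n:ℕ):ℝ) ^ (-r) := by
    rw [Real.rpow_neg h2n_pos.le, Real.rpow_neg (by positivity)]
    exact inv_anti₀ (Real.rpow_pos_of_pos h2n_pos r)
      (Real.rpow_le_rpow h2n_pos.le h2n_ub hr0.le)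
  have hEq : (4:ℝ) ^ r * (P:ℝ) * ((4 * (P:ℝ) ^ (1 + 1/r))) ^ (-r) = (P:ℝ) ^ (-r) := by
    have he : (1 + 1/r) * (-r) = -r - 1 := by field_simp; ring
    rw [Real.mul_rpow (by norm_num : (0:ℝ) ≤ 4)
        (by positivity : (0:ℝ) ≤ (P:ℝ) ^ (1 + 1/r)),
      ← Real.rpow_mul hP0.le, he, Real.rpow_neg (by norm_num : (0:ℝ) ≤ 4)]
    have hPne : (P:ℝ) ^ (-r - 1) = (P:ℝ) ^ (-r) * (P:ℝ)⁻¹ := by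
      rw [Real.rpow_sub hP0, Real.rpow_one, div_eq_mul_inv]
    rw [hPne]
    field_simp
  calc (P:ℝ) ^ (-r) = (4:ℝ) ^ r * (P:ℝ) * ((4 * (P:ℝ) ^ (1 + 1/r))) ^ (-r) := hEq.symm
    _ ≤ (4:ℝ) ^ r * (P:ℝ) * ((2*n:ℕ):ℝ) ^ (-r) :=
        mul_le_mul_of_nonneg_left hmono (by positivity)
    _ ≤ (K:ℝ) * ((2*n:ℕ):ℝ) ^ (-r) :=
        mul_le_mul_of_nonneg_right hK_lb (Real.rpow_nonneg h2n_pos.le _)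

end Stmt6Aux

noncomputable def tailProd (r : ℝ) (j : ℕ) : ℝ :=
  ∏' i : ℕ, (1 - (Nat.nth Nat.Prime (j + i) : ℝ) ^ (-r))⁻¹

theorem stmt6 (r : ℝ) (hr : 1 < r) :
    {j : ℕ | 0 < j ∧ tailProd r j < 1 + (Nat.nth Nat.Prime (j - 1) : ℝ) ^ (-r)}.Finite := by
  have hev := Stmt6Aux.key r hr
  rw [Filter.eventually_atTop] at hev
  obtain ⟨J, hJ⟩ := hev
  apply Set.Finite.subset (Set.finite_Iio J)
  intro j hj
  simp only [Set.mem_setOf_eq] at hj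
  by_contra hlt
  simp only [Set.mem_Iio, not_lt] at hlt
  obtain ⟨N, hN⟩ := hJ j hlt
  have h1 := Stmt6Aux.tailProd_ge r hr j N
  have h2 : 1 + (Nat.nth Nat.Prime (j - 1) : ℝ) ^ (-r) ≤ tailProd r j := by
    unfold tailProd
    refine le_trans ?_ h1
    linarith
  exact absurd hj.2 (not_lt.mpr h2)
end

section
/- Let r > 1 and for each positive integer j set Π_j = (1/(1 + p_j^{-r})) · ∏_{k > j} 1/(1 - p_k^{-r}). If j is such that p_{j+1} ≤ 2^{1/r} p_j, then Π_{j+1} ≤ Π_j. -/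
/-- `Pi' r j = (1 + p_j^{-r})⁻¹ · ∏_{k > j} 1/(1 - p_k^{-r})`, `j ≥ 1` (1-indexed primes). -/
noncomputable def Pi' (r : ℝ) (j : ℕ) : ℝ :=
  (1 + (Nat.nth Nat.Prime (j - 1) : ℝ) ^ (-r))⁻¹ * tailProd r j

open Real

private lemma aux_two_le (k : ℕ) : (2 : ℝ) ≤ (Nat.nth Nat.Prime k : ℝ) := by
  exact_mod_cast (Nat.prime_nth_prime k).two_le

private lemma aux_pos (r : ℝ) (k : ℕ) : 0 < (Nat.nth Nat.Prime k : ℝ) ^ (-r) :=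
  rpow_pos_of_pos (by linarith [aux_two_le k]) _

private lemma aux_le_half (r : ℝ) (hr : 1 < r) (k : ℕ) :
    (Nat.nth Nat.Prime k : ℝ) ^ (-r) ≤ 1 / 2 := by
  calc (Nat.nth Nat.Prime k : ℝ) ^ (-r) ≤ (2 : ℝ) ^ (-r) :=
        rpow_le_rpow_of_nonpos two_pos (aux_two_le k) (by linarith)
    _ ≤ (2 : ℝ) ^ (-1 : ℝ) := rpow_le_rpow_of_exponent_le one_le_two (by linarith)
    _ = 1 / 2 := by rw [rpow_neg_one]; norm_num

private lemma aux_summable (r : ℝ) (hr : 1 < r) (m : ℕ) :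
    Summable (fun i : ℕ => (Nat.nth Nat.Prime (m + i) : ℝ) ^ (-r)) := by
  have h1 : Summable (fun n : ℕ => (n : ℝ) ^ (-r)) :=
    Real.summable_nat_rpow.mpr (by linarith)
  have hinj : Function.Injective (fun i : ℕ => Nat.nth Nat.Prime (m + i)) := by
    intro i k hik
    have hm : StrictMono (Nat.nth Nat.Prime) := Nat.nth_strictMono Nat.infinite_setOf_prime
    have := hm.injective hik
    omega
  exact h1.comp_injective hinj

private lemma aux_hasProd (r : ℝ) (hr : 1 < r) (m : ℕ) :
    HasProd (fun i : ℕ => (1 - (Nat.nth Nat.Prime (m + i) : ℝ) ^ (-r))⁻¹)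
      (Real.exp (∑' i : ℕ, Real.log ((1 - (Nat.nth Nat.Prime (m + i) : ℝ) ^ (-r))⁻¹))) := by
  set a : ℕ → ℝ := fun i => (Nat.nth Nat.Prime (m + i) : ℝ) ^ (-r) with ha
  have hpos : ∀ i, 0 < a i := fun i => aux_pos r _
  have hhalf : ∀ i, a i ≤ 1 / 2 := fun i => aux_le_half r hr _
  have hfac : ∀ i, 0 < (1 - a i)⁻¹ := fun i =>
    inv_pos.mpr (by linarith [hhalf i])
  have hlog : Summable fun i => Real.log ((1 - a i)⁻¹) := by
    refine Summable.of_nonneg_of_le ?_ ?_ ((aux_summable r hr m).mul_left 2)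
    · intro i
      apply Real.log_nonneg
      exact (one_le_inv₀ (by linarith [hhalf i] : (0:ℝ) < 1 - a i)).mpr (by linarith [hpos i])
    · intro i
      have h1 : (0:ℝ) < 1 - a i := by linarith [hhalf i]
      calc Real.log ((1 - a i)⁻¹) ≤ (1 - a i)⁻¹ - 1 :=
            Real.log_le_sub_one_of_pos (hfac i)
        _ ≤ 2 * a i := by
            have : (1 - a i)⁻¹ ≤ 1 + 2 * a i := by
              rw [inv_le_iff_one_le_mul₀ h1]
              nlinarith [hpos i, hhalf i]
            linarith
  have heq : (Real.exp ∘ fun i => Real.log ((1 - a i)⁻¹)) = fun i => (1 - a i)⁻¹ :=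
    funext fun i => Real.exp_log (hfac i)
  exact heq ▸ hlog.hasSum.rexp

private lemma aux_multipliable (r : ℝ) (hr : 1 < r) (m : ℕ) :
    Multipliable (fun i : ℕ => (1 - (Nat.nth Nat.Prime (m + i) : ℝ) ^ (-r))⁻¹) :=
  ⟨_, aux_hasProd r hr m⟩

private lemma aux_tail_pos (r : ℝ) (hr : 1 < r) (m : ℕ) : 0 < tailProd r m := by
  rw [tailProd, (aux_hasProd r hr m).tprod_eq]
  exact Real.exp_pos _

private lemma aux_split (r : ℝ) (hr : 1 < r) (j : ℕ) :
    tailProd r j = (1 - (Nat.nth Nat.Prime j : ℝ) ^ (-r))⁻¹ * tailProd r (j + 1) := by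
  have hM1 : Multipliable (fun n : ℕ => (1 - (Nat.nth Nat.Prime (j + (n + 1)) : ℝ) ^ (-r))⁻¹) :=
    (aux_multipliable r hr (j + 1)).congr fun n => by rw [show j + 1 + n = j + (n + 1) by omega]
  have h0 := tprod_eq_zero_mul' (f := fun k => (1 - (Nat.nth Nat.Prime (j + k) : ℝ) ^ (-r))⁻¹) hM1
  rw [tailProd, h0]
  simp only [add_zero]
  rw [tailProd]
  congr 1
  exact tprod_congr fun b => by rw [show j + (b + 1) = j + 1 + b by omega]

theorem stmt8 (r : ℝ) (hr : 1 < r) (j : ℕ) (hj : 1 ≤ j)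
    (h : (Nat.nth Nat.Prime j : ℝ) ≤ 2 ^ (1 / r) * Nat.nth Nat.Prime (j - 1)) :
    Pi' r (j + 1) ≤ Pi' r j := by
  set x : ℝ := (Nat.nth Nat.Prime (j - 1) : ℝ) ^ (-r) with hxdef
  set y : ℝ := (Nat.nth Nat.Prime j : ℝ) ^ (-r) with hydef
  set T : ℝ := tailProd r (j + 1) with hTdef
  have hxpos : 0 < x := aux_pos r _
  have hypos : 0 < y := aux_pos r _
  have hyhalf : y ≤ 1 / 2 := aux_le_half r hr _
  have hT : 0 < T := aux_tail_pos r hr (j + 1)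
  -- key bound x ≤ 2 y
  have hxy : x ≤ 2 * y := by
    have hr0 : (0:ℝ) < r := by linarith
    have hpj : (0:ℝ) < (Nat.nth Nat.Prime j : ℝ) := by linarith [aux_two_le j]
    have hmono : (2 ^ (1 / r) * (Nat.nth Nat.Prime (j - 1) : ℝ)) ^ (-r)
        ≤ (Nat.nth Nat.Prime j : ℝ) ^ (-r) :=
      rpow_le_rpow_of_nonpos hpj h (by linarith)
    have hsplit : (2 ^ (1 / r) * (Nat.nth Nat.Prime (j - 1) : ℝ)) ^ (-r)
        = (1 / 2) * x := by
      rw [Real.mul_rpow (by positivity) (by linarith [aux_two_le (j-1)]),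
        ← Real.rpow_mul (by norm_num : (0:ℝ) ≤ 2)]
      have : 1 / r * -r = -1 := by field_simp
      rw [this, rpow_neg_one]
      norm_num
      exact hxdef.symm
    rw [hsplit] at hmono
    linarith
  have hsplit := aux_split r hr j
  have hPj : Pi' r j = (1 + x)⁻¹ * ((1 - y)⁻¹ * T) := by
    rw [Pi', hsplit]
  have hPj1 : Pi' r (j + 1) = (1 + y)⁻¹ * T := by
    rw [Pi', Nat.add_sub_cancel]
  rw [hPj, hPj1]
  have h1y : (0:ℝ) < 1 - y := by linarith
  have key : (1 + y)⁻¹ ≤ (1 + x)⁻¹ * (1 - y)⁻¹ := by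
    rw [← mul_inv]
    apply inv_anti₀ (by nlinarith)
    nlinarith
  calc (1 + y)⁻¹ * T ≤ ((1 + x)⁻¹ * (1 - y)⁻¹) * T :=
        mul_le_mul_of_nonneg_right key (le_of_lt hT)
    _ = (1 + x)⁻¹ * ((1 - y)⁻¹ * T) := by ring
end

section
/- Let r > 1, let j be a nonnegative integer such that for all integers j' > j one has ∏_{k > j'} 1/(1 - p_k^{-r}) ≥ 1 + p_{j'}^{-r}, and let N_j be the set of positive integers having no prime factor ≤ p_j (with N_0 = ℕ⁺). Then the topological closure of σ_{-r}(N_j) equals the closed interval [1, ∏_{k > j} 1/(1 - p_k^{-r})]. -/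
noncomputable def sigma' (r : ℝ) (n : ℕ) : ℝ := ∑ d ∈ n.divisors, (d : ℝ) ^ (-r)

/-- `Nset j` is the set of positive integers with no prime factor `≤ p_j`
(the primes `≤ p_j` being exactly `Nat.nth Nat.Prime k` for `k < j`); `Nset 0 = ℕ⁺`. -/
def Nset (j : ℕ) : Set ℕ := {n | 0 < n ∧ ∀ k < j, ¬ Nat.nth Nat.Prime k ∣ n}

open Nat Real Filter Topology

noncomputable def xk (r : ℝ) (k : ℕ) : ℝ := (Nat.nth Nat.Prime k : ℝ) ^ (-r)
noncomputable def Fk (r : ℝ) (k : ℕ) : ℝ := (1 - xk r k)⁻¹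

lemma two_le_p (k : ℕ) : 2 ≤ Nat.nth Nat.Prime k := (Nat.prime_nth_prime k).two_le

lemma succ_le_p (k : ℕ) : k + 1 ≤ Nat.nth Nat.Prime k := by
  induction k with
  | zero => exact (two_le_p 0).trans' (by norm_num)
  | succ n ih =>
    have h : Nat.nth Nat.Prime n < Nat.nth Nat.Prime (n+1) :=
      Nat.nth_lt_nth Nat.infinite_setOf_prime |>.mpr (Nat.lt_succ_self n)
    omega

lemma xk_pos {r : ℝ} (k : ℕ) : 0 < xk r k := by
  apply Real.rpow_pos_of_pos
  exact_mod_cast (Nat.prime_nth_prime k).pos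

lemma xk_le_half {r : ℝ} (hr : 1 < r) (k : ℕ) : xk r k ≤ 1/2 := by
  have hp : (2:ℝ) ≤ (Nat.nth Nat.Prime k : ℝ) := by exact_mod_cast two_le_p k
  have h1 : (2:ℝ) ≤ (Nat.nth Nat.Prime k : ℝ) ^ r := by
    calc (2:ℝ) ≤ (Nat.nth Nat.Prime k : ℝ) := hp
    _ = (Nat.nth Nat.Prime k : ℝ) ^ (1:ℝ) := (Real.rpow_one _).symm
    _ ≤ (Nat.nth Nat.Prime k : ℝ) ^ r :=
      Real.rpow_le_rpow_of_exponent_le (by linarith) hr.le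
  rw [xk, Real.rpow_neg (by positivity)]
  rw [show (1:ℝ)/2 = 2⁻¹ by norm_num]
  exact inv_anti₀ (by norm_num) h1

lemma xk_lt_one {r : ℝ} (hr : 1 < r) (k : ℕ) : xk r k < 1 :=
  lt_of_le_of_lt (xk_le_half hr k) (by norm_num)

lemma summable_xk {r : ℝ} (hr : 1 < r) : Summable (xk r) := by
  have hs : Summable (fun k : ℕ => (((k:ℝ) ^ r)⁻¹)) := Real.summable_nat_rpow_inv.mpr hr
  have hs1 : Summable (fun k : ℕ => (((k+1:ℕ):ℝ) ^ r)⁻¹) := by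
    exact (summable_nat_add_iff 1).mpr hs
  apply Summable.of_nonneg_of_le (fun k => (xk_pos k).le) _ hs1
  intro k
  have hp : ((k+1:ℕ):ℝ) ≤ (Nat.nth Nat.Prime k : ℝ) := by exact_mod_cast succ_le_p k
  have h0 : (0:ℝ) ≤ ((k+1:ℕ):ℝ) := by positivity
  have := Real.rpow_le_rpow h0 hp (by linarith : (0:ℝ) ≤ r)
  rw [xk, Real.rpow_neg (by positivity)]
  exact inv_anti₀ (by positivity) this

noncomputable def Lk (r : ℝ) (k : ℕ) : ℝ := Real.log (Fk r k)

lemma one_lt_Fk {r : ℝ} (hr : 1 < r) (k : ℕ) : 1 < Fk r k := by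
  rw [Fk]
  rw [lt_inv_comm₀ (by norm_num) (by nlinarith [xk_pos (r := r) k, xk_lt_one hr k])]
  nlinarith [xk_pos (r := r) k]

lemma Fk_pos {r : ℝ} (hr : 1 < r) (k : ℕ) : 0 < Fk r k := lt_trans one_pos (one_lt_Fk hr k)

lemma Lk_nonneg {r : ℝ} (hr : 1 < r) (k : ℕ) : 0 ≤ Lk r k :=
  Real.log_nonneg (one_lt_Fk hr k).le

lemma Lk_le {r : ℝ} (hr : 1 < r) (k : ℕ) : Lk r k ≤ 2 * xk r k := by
  have hx := xk_pos (r := r) k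
  have hxh := xk_le_half hr k
  have h1 : Real.log (Fk r k) ≤ Fk r k - 1 := Real.log_le_sub_one_of_pos (Fk_pos hr k)
  have h2 : Fk r k - 1 ≤ 2 * xk r k := by
    rw [Fk]
    have hpos : (0:ℝ) < 1 - xk r k := by linarith
    rw [inv_eq_one_div, div_sub' hpos.ne', div_le_iff₀ hpos]
    nlinarith
  exact (h1.trans h2)

lemma summable_Lk {r : ℝ} (hr : 1 < r) : Summable (Lk r) :=
  Summable.of_nonneg_of_le (Lk_nonneg hr) (Lk_le hr) ((summable_xk hr).mul_left 2)

lemma hasProd_tail {r : ℝ} (hr : 1 < r) (j : ℕ) :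
    HasProd (fun i => Fk r (j + i)) (Real.exp (∑' i, Lk r (j + i))) := by
  have hs : Summable (fun i => Lk r (j + i)) := by
    exact ((summable_nat_add_iff j).mpr (summable_Lk hr)).congr (fun i => by rw [Nat.add_comm])
  have heq : (Real.exp ∘ fun i => Lk r (j + i)) = fun i => Fk r (j + i) :=
    funext fun i => Real.exp_log (Fk_pos hr _)
  exact heq ▸ hs.hasSum.rexp

lemma tailProd_def (r : ℝ) (j : ℕ) : tailProd r j = ∏' i, Fk r (j + i) := rfl

lemma hasProd_tailProd {r : ℝ} (hr : 1 < r) (j : ℕ) :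
    HasProd (fun i => Fk r (j + i)) (tailProd r j) := by
  rw [tailProd_def, (hasProd_tail hr j).tprod_eq]
  exact hasProd_tail hr j

lemma tailProd_eq_exp {r : ℝ} (hr : 1 < r) (j : ℕ) :
    tailProd r j = Real.exp (∑' i, Lk r (j + i)) :=
  (hasProd_tailProd hr j).unique (hasProd_tail hr j)

lemma one_le_tailProd {r : ℝ} (hr : 1 < r) (j : ℕ) : 1 ≤ tailProd r j := by
  rw [tailProd_eq_exp hr j, ← Real.exp_zero, Real.exp_le_exp]
  exact tsum_nonneg (fun i => Lk_nonneg hr _)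

lemma tailProd_pos {r : ℝ} (hr : 1 < r) (j : ℕ) : 0 < tailProd r j :=
  lt_of_lt_of_le one_pos (one_le_tailProd hr j)

lemma tailProd_succ {r : ℝ} (hr : 1 < r) (j : ℕ) :
    tailProd r j = Fk r j * tailProd r (j + 1) := by
  have hm : Multipliable (fun i => Fk r (j + (i + 1))) :=
    (hasProd_tailProd hr (j+1)).multipliable.congr
      (fun i => by rw [show j + 1 + i = j + (i + 1) by omega])
  have h := tprod_eq_zero_mul' (f := fun i => Fk r (j + i)) hm
  rw [tailProd_def, h, Nat.add_zero, tailProd_def]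
  congr 1
  exact tprod_congr fun i => by show Fk r (j + (i+1)) = _; rw [show j + (i + 1) = j + 1 + i by omega]

lemma one_lt_tailProd {r : ℝ} (hr : 1 < r) (j : ℕ) : 1 < tailProd r j := by
  rw [tailProd_succ hr j]
  nlinarith [one_lt_Fk hr j, one_le_tailProd hr (j+1)]

lemma tendsto_tailProd {r : ℝ} (hr : 1 < r) :
    Tendsto (fun k => tailProd r k) atTop (𝓝 1) := by
  have h0 : Tendsto (fun k => ∑' i, Lk r (i + k)) atTop (𝓝 0) := tendsto_sum_nat_add (Lk r)
  have h1 : Tendsto (fun k => ∑' i, Lk r (k + i)) atTop (𝓝 0) := by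
    refine h0.congr fun k => tsum_congr fun i => by rw [Nat.add_comm]
  have := h1.rexp
  rw [Real.exp_zero] at this
  exact this.congr fun k => (tailProd_eq_exp hr k).symm

lemma one_le_finprod_real {s : Finset ℕ} {f : ℕ → ℝ} (h : ∀ i ∈ s, 1 ≤ f i) :
    1 ≤ ∏ i ∈ s, f i := by
  calc (1:ℝ) = ∏ _i ∈ s, 1 := (Finset.prod_const_one).symm
  _ ≤ ∏ i ∈ s, f i := Finset.prod_le_prod (by norm_num) h

lemma prod_le_hasProd_real {f : ℕ → ℝ} {a : ℝ} (h1 : ∀ i, 1 ≤ f i) (hf : HasProd f a)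
    (s : Finset ℕ) : ∏ i ∈ s, f i ≤ a := by
  refine ge_of_tendsto hf ?_
  filter_upwards [Filter.eventually_ge_atTop s] with t ht
  have hsub : s ⊆ t := ht
  calc ∏ i ∈ s, f i ≤ (∏ i ∈ t \ s, f i) * ∏ i ∈ s, f i := by
        have h0 : (0:ℝ) ≤ ∏ i ∈ s, f i := le_trans zero_le_one (one_le_finprod_real fun i _ => h1 i)
        nlinarith [one_le_finprod_real (s := t \ s) (f := f) (fun i _ => h1 i)]
  _ = ∏ i ∈ t, f i := Finset.prod_sdiff hsub


open ArithmeticFunction in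
noncomputable def sg (r : ℝ) : ArithmeticFunction ℝ :=
  ⟨fun n => if n = 0 then 0 else (n : ℝ) ^ (-r), by simp⟩

lemma isMult_sg (r : ℝ) : (sg r).IsMultiplicative := by
  constructor
  · simp [sg]
  · intro m n hmn
    rcases eq_or_ne m 0 with rfl | hm
    · have : n = 1 := by simpa using hmn
      simp [sg, this]
    rcases eq_or_ne n 0 with rfl | hn
    · have : m = 1 := by simpa [Nat.coprime_zero_right] using hmn
      simp [sg, this]
    · simp only [sg, ArithmeticFunction.coe_mk, if_neg hm, if_neg hn,
        if_neg (Nat.mul_ne_zero hm hn)]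
      push_cast
      exact Real.mul_rpow (by positivity) (by positivity)

open ArithmeticFunction ArithmeticFunction.zeta in
lemma sigma'_eq (r : ℝ) (n : ℕ) : sigma' r n = ((ζ : ArithmeticFunction ℝ) * sg r) n := by
  rw [coe_zeta_mul_apply, sigma']
  refine Finset.sum_congr rfl fun d hd => ?_
  have hd0 : d ≠ 0 := (Nat.pos_of_mem_divisors hd).ne'
  simp only [sg, ArithmeticFunction.coe_mk, if_neg hd0]

open ArithmeticFunction ArithmeticFunction.zeta in
lemma isMult_sigma' (r : ℝ) :
    ((ζ : ArithmeticFunction ℝ) * sg r).IsMultiplicative :=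
  isMultiplicative_zeta.natCast.mul (isMult_sg r)

lemma sigma'_mul {r : ℝ} {m n : ℕ} (h : Nat.Coprime m n) :
    sigma' r (m * n) = sigma' r m * sigma' r n := by
  rw [sigma'_eq, sigma'_eq, sigma'_eq]
  exact (isMult_sigma' r).map_mul_of_coprime h

lemma sigma'_one (r : ℝ) : sigma' r 1 = 1 := by simp [sigma']

lemma sigma'_prime_pow {r : ℝ} {p e : ℕ} (hp : p.Prime) :
    sigma' r (p ^ e) = ∑ i ∈ Finset.range (e + 1), ((p:ℝ) ^ (-r)) ^ i := by
  rw [sigma', Nat.sum_divisors_prime_pow hp]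
  refine Finset.sum_congr rfl fun i _ => ?_
  have hp0 : (0:ℝ) < (p:ℝ) := by exact_mod_cast hp.pos
  push_cast
  rw [← Real.rpow_natCast ((p:ℝ) ^ (-r)) i, ← Real.rpow_natCast (p:ℝ) i,
    ← Real.rpow_mul hp0.le, ← Real.rpow_mul hp0.le, mul_comm]

lemma count_nth_prime (k : ℕ) : Nat.count Nat.Prime (Nat.nth Nat.Prime k) = k :=
  Nat.count_nth_of_infinite Nat.infinite_setOf_prime k

lemma nth_count_prime {p : ℕ} (hp : p.Prime) : Nat.nth Nat.Prime (Nat.count Nat.Prime p) = p :=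
  Nat.nth_count hp

lemma count_ge_of_mem_Nset {j n : ℕ} (hn : n ∈ Nset j) {q : ℕ} (hq : q.Prime) (hdvd : q ∣ n) :
    j ≤ Nat.count Nat.Prime q := by
  by_contra hlt
  push_neg at hlt
  exact hn.2 _ hlt (by rw [nth_count_prime hq]; exact hdvd)

lemma sigma'_nonneg (r : ℝ) (n : ℕ) : 0 ≤ sigma' r n :=
  Finset.sum_nonneg fun d _ => by positivity

lemma one_le_sigma' {r : ℝ} {n : ℕ} (hn : 0 < n) : 1 ≤ sigma' r n := by
  have h1 : (1:ℕ) ∈ n.divisors := Nat.one_mem_divisors.mpr hn.ne'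
  have := Finset.single_le_sum (f := fun d : ℕ => (d:ℝ) ^ (-r))
    (fun d _ => by positivity) h1
  simpa [sigma'] using this

lemma geom_sum_le_Fk {q : ℝ} (h0 : 0 ≤ q) (h1 : q < 1) (m : ℕ) :
    ∑ i ∈ Finset.range m, q ^ i ≤ (1 - q)⁻¹ :=
  sum_le_hasSum _ (fun i _ => by positivity) (hasSum_geometric_of_lt_one h0 h1)

lemma xk_eq {r : ℝ} {p : ℕ} (hp : p.Prime) : (p:ℝ) ^ (-r) = xk r (Nat.count Nat.Prime p) := by
  rw [xk, nth_count_prime hp]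

lemma sigma'_prime_pow_le {r : ℝ} (hr : 1 < r) {p e : ℕ} (hp : p.Prime) :
    sigma' r (p ^ e) ≤ Fk r (Nat.count Nat.Prime p) := by
  rw [sigma'_prime_pow hp, xk_eq hp]
  exact geom_sum_le_Fk (xk_pos _).le (xk_lt_one hr _) _

lemma sigma'_le_tailProd {r : ℝ} (hr : 1 < r) {j n : ℕ} (hn : n ∈ Nset j) :
    sigma' r n ≤ tailProd r j := by
  have hn0 : n ≠ 0 := hn.1.ne'
  rw [sigma'_eq, (isMult_sigma' r).multiplicative_factorization _ hn0]
  rw [Nat.prod_factorization_eq_prod_primeFactors]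
  set P := n.primeFactors with hP
  have hprime : ∀ p ∈ P, Nat.Prime p := fun p hp => Nat.prime_of_mem_primeFactors hp
  have step0 := Finset.prod_congr (rfl : P = P)
    (fun p _ => (sigma'_eq r (p ^ n.factorization p)).symm)
  rw [step0]
  have step1 : ∏ p ∈ P, sigma' r (p ^ n.factorization p)
      ≤ ∏ p ∈ P, Fk r (Nat.count Nat.Prime p) :=
    Finset.prod_le_prod (fun p _ => sigma'_nonneg r _)
      (fun p hp => sigma'_prime_pow_le hr (hprime p hp))
  refine step1.trans ?_
  have hinj : Set.InjOn (Nat.count Nat.Prime) P := by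
    intro p hp q hq hpq
    rw [← nth_count_prime (hprime p hp), ← nth_count_prime (hprime q hq), hpq]
  rw [← Finset.prod_image hinj]
  set s := P.image (Nat.count Nat.Prime) with hs
  have hsge : ∀ k ∈ s, j ≤ k := by
    intro k hk
    rw [hs] at hk
    obtain ⟨p, hp, rfl⟩ := Finset.mem_image.mp hk
    exact count_ge_of_mem_Nset hn (hprime p hp) (Nat.dvd_of_mem_primeFactors hp)
  have hinj2 : Set.InjOn (· - j) s := by
    intro a ha b hb hab
    have ha' := hsge a ha; have hb' := hsge b hb
    simp only at hab
    omega
  have heq : ∏ k ∈ s, Fk r k = ∏ i ∈ s.image (· - j), Fk r (j + i) := by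
    rw [Finset.prod_image hinj2]
    exact Finset.prod_congr rfl fun k hk => by rw [show j + (k - j) = k by have := hsge k hk; omega]
  rw [heq]
  exact prod_le_hasProd_real (fun i => (one_lt_Fk hr _).le) (hasProd_tailProd hr j) _

lemma geom_reach {q : ℝ} (h0 : 0 ≤ q) (h1 : q < 1) {c : ℝ} (hc : c < (1 - q)⁻¹) :
    ∃ m : ℕ, c < ∑ i ∈ Finset.range m, q ^ i := by
  have ht := (hasSum_geometric_of_lt_one h0 h1).tendsto_sum_nat
  exact (ht.eventually_const_lt hc).exists

lemma one_le_geom {q : ℝ} (h0 : 0 ≤ q) (e : ℕ) :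
    1 ≤ ∑ i ∈ Finset.range (e + 1), q ^ i := by
  have h1 : ((0:ℕ) ∈ Finset.range (e+1)) := Finset.mem_range.mpr (Nat.succ_pos e)
  have := Finset.single_le_sum (f := fun i : ℕ => q ^ i) (fun i _ => by positivity) h1
  simpa using this

lemma greedy_step {r : ℝ} (hr : 1 < r) {j k : ℕ} (hjk : j ≤ k)
    (h : ∀ j' > j, 1 + (Nat.nth Nat.Prime (j' - 1) : ℝ) ^ (-r) ≤ tailProd r j')
    {u : ℝ} (hu1 : 1 ≤ u) (huT : u < tailProd r k) :
    ∃ e : ℕ, (∑ i ∈ Finset.range (e+1), xk r k ^ i) ≤ u ∧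
      u < (∑ i ∈ Finset.range (e+1), xk r k ^ i) * tailProd r (k+1) := by
  set q := xk r k with hq
  have hq0 : 0 < q := xk_pos k
  have hq1 : q < 1 := xk_lt_one hr k
  have hstep : 1 + q ≤ tailProd r (k+1) := by
    have := h (k+1) (by omega)
    simpa [hq, xk] using this
  have hT1 : 0 < tailProd r (k+1) := tailProd_pos hr (k+1)
  rcases lt_or_ge u (1 - q)⁻¹ with hcase | hcase
  · -- u < Fk r k
    have hex : ∃ m : ℕ, u < ∑ i ∈ Finset.range m, q ^ i := geom_reach hq0.le hq1 hcase
    classical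
    set E := Nat.find hex with hE
    have hEprop : u < ∑ i ∈ Finset.range E, q ^ i := Nat.find_spec hex
    have hE2 : 2 ≤ E := by
      by_contra hc2
      push_neg at hc2
      interval_cases E
      · simp at hEprop; linarith
      · simp at hEprop; linarith
    have hmin : ¬ u < ∑ i ∈ Finset.range (E-1), q ^ i := Nat.find_min hex (by omega)
    push_neg at hmin
    refine ⟨E - 2, ?_, ?_⟩
    · rw [show E - 2 + 1 = E - 1 by omega]; exact hmin
    · rw [show E - 2 + 1 = E - 1 by omega]
      have hsplit : ∑ i ∈ Finset.range E, q ^ i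
          = (∑ i ∈ Finset.range (E-1), q ^ i) + q ^ (E-1) := by
        rw [show E = (E-1) + 1 by omega, Finset.sum_range_succ]
        congr 1 <;> rw [show E - 1 + 1 - 1 = E - 1 by omega]
      have hge1 : 1 ≤ ∑ i ∈ Finset.range (E-1), q ^ i := by
        have := one_le_geom hq0.le (E - 2)
        rwa [show E - 2 + 1 = E - 1 by omega] at this
      have hpow : q ^ (E-1) ≤ q := by
        calc q ^ (E-1) ≤ q ^ 1 := pow_le_pow_of_le_one hq0.le hq1.le (by omega)
        _ = q := pow_one q
      calc u < (∑ i ∈ Finset.range (E-1), q ^ i) + q ^ (E-1) := by rw [← hsplit]; exact hEprop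
      _ ≤ (∑ i ∈ Finset.range (E-1), q ^ i) * (1 + q) := by nlinarith
      _ ≤ (∑ i ∈ Finset.range (E-1), q ^ i) * tailProd r (k+1) := by nlinarith
  · -- (1-q)⁻¹ ≤ u
    have hdiv : u / tailProd r (k+1) < (1 - q)⁻¹ := by
      rw [div_lt_iff₀ hT1]
      calc u < tailProd r k := huT
      _ = Fk r k * tailProd r (k+1) := tailProd_succ hr k
      _ = (1-q)⁻¹ * tailProd r (k+1) := rfl
    obtain ⟨m, hm⟩ := geom_reach hq0.le hq1 hdiv
    refine ⟨m, ?_, ?_⟩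
    · exact (geom_sum_le_Fk hq0.le hq1 (m+1)).trans hcase
    · calc u = (u / tailProd r (k+1)) * tailProd r (k+1) := (div_mul_cancel₀ u hT1.ne').symm
      _ < (∑ i ∈ Finset.range m, q ^ i) * tailProd r (k+1) := mul_lt_mul_of_pos_right hm hT1
      _ ≤ (∑ i ∈ Finset.range (m+1), q ^ i) * tailProd r (k+1) := by
          have hmono : ∑ i ∈ Finset.range m, q^i ≤ ∑ i ∈ Finset.range (m+1), q^i := by
            rw [Finset.sum_range_succ]; nlinarith [pow_nonneg hq0.le m]
          exact mul_le_mul_of_nonneg_right hmono hT1.le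

lemma greedy {r : ℝ} (hr : 1 < r) {j : ℕ}
    (h : ∀ j' > j, 1 + (Nat.nth Nat.Prime (j' - 1) : ℝ) ^ (-r) ≤ tailProd r j')
    {t : ℝ} (ht1 : 1 ≤ t) (htT : t < tailProd r j) :
    ∀ K, j ≤ K → ∃ n : ℕ, n ∈ Nset j ∧
      (∀ q ∈ n.primeFactors, Nat.count Nat.Prime q < K) ∧
      sigma' r n ≤ t ∧ t < sigma' r n * tailProd r K := by
  intro K hK
  induction K, hK using Nat.le_induction with
  | base =>
    refine ⟨1, ⟨one_pos, fun k _ hd => (Nat.prime_nth_prime k).ne_one (Nat.dvd_one.mp hd)⟩,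
      by simp, ?_, ?_⟩
    · rw [sigma'_one]; exact ht1
    · rw [sigma'_one, one_mul]; exact htT
  | succ k hk ih =>
    obtain ⟨n, hnN, hcount, hle, hlt⟩ := ih
    have hs1 : 1 ≤ sigma' r n := one_le_sigma' hnN.1
    have hs0 : (0:ℝ) < sigma' r n := lt_of_lt_of_le one_pos hs1
    have hu1 : 1 ≤ t / sigma' r n := (one_le_div hs0).mpr hle
    have huT : t / sigma' r n < tailProd r k := by
      rw [div_lt_iff₀ hs0, mul_comm]; exact hlt
    obtain ⟨e, hG1, hG2⟩ := greedy_step hr hk h hu1 huT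
    set p := Nat.nth Nat.Prime k with hp'
    have hp : p.Prime := Nat.prime_nth_prime k
    have hcountp : Nat.count Nat.Prime p = k := count_nth_prime k
    have hpn : ¬ p ∣ n := by
      intro hd
      have := hcount p (Nat.mem_primeFactors.mpr ⟨hp, hd, hnN.1.ne'⟩)
      omega
    have hcop : n.Coprime (p ^ e) := ((hp.coprime_iff_not_dvd.mpr hpn).symm).pow_right e
    have hGeq : sigma' r (p ^ e) = ∑ i ∈ Finset.range (e+1), xk r k ^ i := by
      rw [sigma'_prime_pow hp]
      rfl
    have hsig : sigma' r (n * p ^ e)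
        = sigma' r n * ∑ i ∈ Finset.range (e+1), xk r k ^ i := by
      rw [sigma'_mul hcop, hGeq]
    refine ⟨n * p ^ e, ⟨Nat.mul_pos hnN.1 (Nat.pow_pos hp.pos), ?_⟩, ?_, ?_, ?_⟩
    · intro k' hk' hd
      have hq' : (Nat.nth Nat.Prime k').Prime := Nat.prime_nth_prime k'
      rcases (Nat.Prime.dvd_mul hq').mp hd with hd1 | hd2
      · exact hnN.2 k' hk' hd1
      · have : Nat.nth Nat.Prime k' = p := (Nat.prime_dvd_prime_iff_eq hq' hp).mp
          (hq'.dvd_of_dvd_pow hd2)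
        have : k' = k := by
          have h1 := count_nth_prime k'
          rw [this, hcountp] at h1
          omega
        omega
    · intro q hq
      rw [Nat.primeFactors_mul hnN.1.ne' (pow_ne_zero e hp.pos.ne'), Finset.mem_union] at hq
      rcases hq with hq | hq
      · have := hcount q hq
        omega
      · have hqp : q = p := by
          obtain ⟨hq1, hq2, -⟩ := Nat.mem_primeFactors.mp hq
          exact (Nat.prime_dvd_prime_iff_eq hq1 hp).mp (hq1.dvd_of_dvd_pow hq2)
        rw [hqp, hcountp]
        omega
    · rw [hsig]
      calc sigma' r n * ∑ i ∈ Finset.range (e+1), xk r k ^ i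
          ≤ sigma' r n * (t / sigma' r n) := mul_le_mul_of_nonneg_left hG1 hs0.le
      _ = t := by field_simp
    · rw [hsig, mul_assoc]
      calc t = sigma' r n * (t / sigma' r n) := by field_simp
      _ < sigma' r n * ((∑ i ∈ Finset.range (e+1), xk r k ^ i) * tailProd r (k+1)) :=
        mul_lt_mul_of_pos_left hG2 hs0

theorem stmt10 (r : ℝ) (hr : 1 < r) (j : ℕ)
    (h : ∀ j' > j, 1 + (Nat.nth Nat.Prime (j' - 1) : ℝ) ^ (-r) ≤ tailProd r j') :
    closure (sigma' r '' Nset j) = Set.Icc 1 (tailProd r j) := by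
  apply Set.Subset.antisymm
  · apply closure_minimal _ isClosed_Icc
    rintro x ⟨n, hn, rfl⟩
    exact ⟨one_le_sigma' hn.1, sigma'_le_tailProd hr hn⟩
  · have hIco : Set.Ico (1:ℝ) (tailProd r j) ⊆ closure (sigma' r '' Nset j) := by
      rintro t ⟨ht1, htT⟩
      rw [Metric.mem_closure_iff]
      intro ε hε
      have htpos : (0:ℝ) < t := lt_of_lt_of_le one_pos ht1
      have hev : ∀ᶠ K in atTop, tailProd r K < 1 + ε / t :=
        (tendsto_tailProd hr).eventually_lt_const (by have := div_pos hε htpos; linarith)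
      obtain ⟨K, hKlt, hKj⟩ := (hev.and (eventually_ge_atTop j)).exists
      obtain ⟨n, hnN, -, hle, hlt⟩ := greedy hr h ht1 htT K hKj
      refine ⟨sigma' r n, ⟨n, hnN, rfl⟩, ?_⟩
      have hs1 : 1 ≤ sigma' r n := one_le_sigma' hnN.1
      have hs0 : (0:ℝ) < sigma' r n := lt_of_lt_of_le one_pos hs1
      have hkey : t - sigma' r n < ε := by
        have h2 : sigma' r n * tailProd r K < sigma' r n * (1 + ε / t) :=
          mul_lt_mul_of_pos_left hKlt hs0
        have h3 : sigma' r n * (ε / t) ≤ t * (ε / t) :=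
          mul_le_mul_of_nonneg_right hle (div_nonneg hε.le htpos.le)
        have h4 : t * (ε / t) = ε := by field_simp
        nlinarith
      rw [Real.dist_eq, abs_of_nonneg (by linarith : (0:ℝ) ≤ t - sigma' r n)]
      linarith
    have h1T : (1:ℝ) ≠ tailProd r j := (one_lt_tailProd hr j).ne
    calc Set.Icc 1 (tailProd r j) = closure (Set.Ico 1 (tailProd r j)) := (closure_Ico h1T).symm
    _ ⊆ closure (sigma' r '' Nset j) := closure_minimal hIco isClosed_closure
end
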